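/- arXiv:1911.02552 — 2 statements merged into one kernel-verified Lean document; each statement's English description precedes it below -/
import Mathlib

section
/- Let (A_i)_{i∈I} be a family of closed convex subsets of ℝⁿ with 0 ∈ ⋂_{i∈I} A_i, and let (t_i)_{i∈I} ⊆ ℝ with sup_{i∈I} t_i ≤ 0. Then for every x̄* ∈ ri(⋃_{J∈𝓕(I)} Σ_{j∈J} A_j), one has min_{x∈ℝⁿ} ( Σ^R_{i∈I} (σ_{A_i}(x) − t_i) − ⟨x̄*,x⟩ ) = sup { −Σ_{j∈J} t_j : J ∈ 𝓕(I), x̄* ∈ Σ_{j∈J} A_j }, with the minimum on the left attained. -/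
/-! With `S_J = -∑_{j ∈ J} t_j`, the robust sum at `x` is `sup_J (σ_{∑_J A_j}(x) + S_J)`, i.e.
the support function at `(x, 1)` of `E = ⋃_J (∑_J A_j) × (-∞, S_J]`. Since `0 ∈ A_i` and
`t_i ≤ 0` this union is directed, hence convex, and weak duality is immediate. If the dual value
`d` is finite, then `(p, d)` is a relative boundary point of `E` while `(p, -1)` is a relative
interior point, so a supporting hyperplane of `E` at `(p, d)` is not vertical; its slope is a
primal solution of value `d`.
-/
open scoped Pointwise Topology
open Set Matrix

noncomputable section

variable {n : ℕ} {ι : Type*}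

/-- Fenchel conjugate of `f : ℝⁿ → ℝ ∪ {+∞}` (modeled as `EReal`-valued). -/
def fconj (f : (Fin n → ℝ) → EReal) (p : Fin n → ℝ) : EReal :=
  ⨆ x : Fin n → ℝ, ((p ⬝ᵥ x : ℝ) : EReal) - f x

/-- Effective domain. -/
def fdom (f : (Fin n → ℝ) → EReal) : Set (Fin n → ℝ) := {x | f x ≠ ⊤}

/-- Domain of the conjugate. -/
def fdomStar (f : (Fin n → ℝ) → EReal) : Set (Fin n → ℝ) := {p | fconj f p ≠ ⊤}

/-- Epigraph of the conjugate. -/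
def fepiStar (f : (Fin n → ℝ) → EReal) : Set ((Fin n → ℝ) × ℝ) :=
  {q | fconj f q.1 ≤ (q.2 : EReal)}

/-- Proper function: never `-∞`, not identically `+∞`. -/
def EProper {X : Type*} (f : X → EReal) : Prop := (∀ x, f x ≠ ⊥) ∧ ∃ x, f x ≠ ⊤

/-- Convexity of an extended-real-valued function, via its epigraph. -/
def EConvexFn {X : Type*} [AddCommGroup X] [Module ℝ X] (f : X → EReal) : Prop :=
  Convex ℝ {q : X × ℝ | f q.1 ≤ (q.2 : EReal)}

/-- Robust sum of a family of functions. -/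
def rsum {X : Type*} (f : ι → X → EReal) (x : X) : EReal :=
  ⨆ (J : Finset ι) (_ : J.Nonempty), ∑ j ∈ J, f j x

/-- Optimal value of the primal problem `(RP_p)`. -/
def fprimalVal (f : (Fin n → ℝ) → EReal) (p : Fin n → ℝ) : EReal :=
  ⨅ x : Fin n → ℝ, f x - ((p ⬝ᵥ x : ℝ) : EReal)

/-- Optimal solution set of the primal problem `(RP_p)`. -/
def fprimalSol (f : (Fin n → ℝ) → EReal) (p : Fin n → ℝ) : Set (Fin n → ℝ) :=
  {x | f x - ((p ⬝ᵥ x : ℝ) : EReal) = fprimalVal f p}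

/-- Optimal value of the dual problem `(RD_p)`. -/
def fdualVal (f : ι → (Fin n → ℝ) → EReal) (p : Fin n → ℝ) : EReal :=
  ⨆ (J : Finset ι) (_ : J.Nonempty) (xs : ι → Fin n → ℝ) (_ : ∑ j ∈ J, xs j = p),
    -∑ j ∈ J, fconj (f j) (xs j)

/-- Support function of a subset of `ℝⁿ`. -/
def fsuppFn (A : Set (Fin n → ℝ)) (x : Fin n → ℝ) : EReal :=
  ⨆ a ∈ A, ((a ⬝ᵥ x : ℝ) : EReal)

theorem Convex.exists_lt_and_forall_le_of_notMem_interior {E : Type*} [TopologicalSpace E]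
    [AddCommGroup E] [Module ℝ E] [IsTopologicalAddGroup E] [ContinuousSMul ℝ E] {s : Set E}
    {x y : E} (hs : Convex ℝ s) (hy : y ∈ interior s) (hx : x ∉ interior s) :
    ∃ f : StrongDual ℝ E, f y < f x ∧ ∀ z ∈ s, f z ≤ f x := by
  obtain ⟨f, hf⟩ := geometric_hahn_banach_open_point hs.interior isOpen_interior hx
  refine ⟨f, hf y hy, fun z hz => closure_minimal (fun w hw => (hf w hw).le)
    (isClosed_le f.continuous continuous_const) ?_⟩
  rw [hs.closure_interior_eq_closure_of_nonempty_interior ⟨y, hy⟩]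
  exact subset_closure hz

theorem Convex.exists_forall_add_le_of_notMem_interior {W : Type*} [TopologicalSpace W]
    [AddCommGroup W] [Module ℝ W] [IsTopologicalAddGroup W] [ContinuousSMul ℝ W]
    {E : Set (W × ℝ)} {m d : ℝ} (hE : Convex ℝ E) (hm : ((0 : W), m) ∈ interior E)
    (hd : ((0 : W), d) ∉ interior E) (hmd : m < d) :
    ∃ ψ : StrongDual ℝ W, ∀ z ∈ E, ψ z.1 + z.2 ≤ d := by
  obtain ⟨f, hf_lt, hf_le⟩ := hE.exists_lt_and_forall_le_of_notMem_interior hm hd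
  set β := f (0, 1)
  have hf : ∀ w s, f (w, s) = f (w, 0) + s * β := fun w s => by
    rw [← smul_eq_mul, ← f.map_smul, ← map_add]
    simp
  have hβ : 0 < β := by
    rw [hf, hf 0 d] at hf_lt
    nlinarith
  refine ⟨β⁻¹ • f.comp (ContinuousLinearMap.inl ℝ W ℝ), fun ⟨w, s⟩ hz => ?_⟩
  have key := hf_le (w, s) hz
  rw [hf, hf 0 d, Prod.mk_zero_zero, map_zero, zero_add] at key
  simp only [_root_.smul_apply, ContinuousLinearMap.comp_apply,
    ContinuousLinearMap.inl_apply, smul_eq_mul]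
  rw [inv_mul_eq_div, div_add' _ _ _ hβ.ne', div_le_iff₀ hβ]
  linarith

section Separation

variable {V : Type*} [NormedAddCommGroup V] [NormedSpace ℝ V]

lemma exists_pos_forall_mem_direction_of_mem_intrinsicInterior {C : Set V} {p : V}
    (hp : p ∈ intrinsicInterior ℝ C) :
    ∃ ε > 0, ∀ v ∈ (affineSpan ℝ C).direction, ‖v‖ < ε → p + v ∈ C := by
  obtain ⟨y, hy, rfl⟩ := mem_intrinsicInterior.1 hp
  obtain ⟨ε, hε, hball⟩ := Metric.mem_nhds_iff.1 (mem_interior_iff_mem_nhds.1 hy)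
  refine ⟨ε, hε, fun v hv hvε => ?_⟩
  have hmem : v +ᵥ (y : V) ∈ affineSpan ℝ C := AffineSubspace.vadd_mem_of_mem_direction hv y.2
  have : (⟨_, hmem⟩ : affineSpan ℝ C) ∈ Metric.ball y ε := by
    simpa [Subtype.dist_eq, dist_eq_norm] using hvε
  simpa [add_comm] using hball this

theorem exists_dual_add_le_of_mem_intrinsicInterior {C : Set V} {E : Set (V × ℝ)} {p : V} {d : ℝ}
    (hE : Convex ℝ E) (hEC : ∀ z ∈ E, z.1 ∈ C) (hCE : ∀ a ∈ C, ∀ s ≤ 0, (a, s) ∈ E)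
    (hp : p ∈ intrinsicInterior ℝ C) (hpd : ∀ s, (p, s) ∈ E → s ≤ d) :
    ∃ φ : Module.Dual ℝ V, ∀ z ∈ E, φ z.1 + z.2 ≤ φ p + d := by
  set L := (affineSpan ℝ C).direction
  have hpC : p ∈ C := intrinsicInterior_subset hp
  set E' : Set (L × ℝ) := {z | (p + z.1, z.2) ∈ E}
  have hE' : Convex ℝ E' := by
    have : E' = L.subtype.prodMap LinearMap.id ⁻¹' ((fun z => (p, 0) + z) ⁻¹' E) := by
      ext; simp [E']
    exact this ▸ (hE.translate_preimage_right (p, 0)).linear_preimage _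
  have hint : ((0 : L), (-1 : ℝ)) ∈ interior E' := by
    obtain ⟨ε, hε, hball⟩ := exists_pos_forall_mem_direction_of_mem_intrinsicInterior hp
    refine mem_interior_iff_mem_nhds.2 (Metric.mem_nhds_iff.2 ⟨min ε 1, by positivity, ?_⟩)
    rintro ⟨v, s⟩ hvs
    rw [Metric.mem_ball, Prod.dist_eq, max_lt_iff, lt_min_iff, lt_min_iff] at hvs
    have hv : ‖(v : V)‖ < ε := by simpa using hvs.1.1
    have hs : s ≤ 0 := by linarith [abs_lt.1 (Real.dist_eq s (-1) ▸ hvs.2.2)]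
    exact hCE _ (hball v v.2 hv) s hs
  have hnot : ((0 : L), d) ∉ interior E' := by
    intro h
    obtain ⟨δ, hδ, hball⟩ := Metric.mem_nhds_iff.1 (mem_interior_iff_mem_nhds.1 h)
    have : ((0 : L), d + δ / 2) ∈ E' := hball (by simp [Prod.dist_eq, abs_of_pos, hδ])
    linarith [hpd _ (by simpa [E'] using this)]
  obtain ⟨ψ, hψ⟩ := hE'.exists_forall_add_le_of_notMem_interior hint hnot
    (by linarith [hpd 0 (hCE p hpC 0 le_rfl)])
  obtain ⟨g, hg⟩ := LinearMap.exists_extend ψ.toLinearMap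
  refine ⟨g, fun ⟨a, s⟩ hz => ?_⟩
  have hdir : a - p ∈ L := AffineSubspace.vsub_mem_direction
    (subset_affineSpan ℝ C (hEC _ hz)) (subset_affineSpan ℝ C hpC)
  have key := hψ (⟨a - p, hdir⟩, s) (by simpa [E'] using hz)
  have hga : g (a - p) = ψ ⟨a - p, hdir⟩ := LinearMap.congr_fun hg ⟨a - p, hdir⟩
  rw [← hga, map_sub] at key
  linarith

end Separation

lemma EReal.coe_finset_sum {α : Type*} (s : Finset α) (f : α → ℝ) :
    ((∑ i ∈ s, f i : ℝ) : EReal) = ∑ i ∈ s, (f i : EReal) :=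
  map_sum (⟨⟨(↑), EReal.coe_zero⟩, EReal.coe_add⟩ : ℝ →+ EReal) f s

lemma fsuppFn_zero (x : Fin n → ℝ) : fsuppFn 0 x = 0 := by
  simp [fsuppFn]

lemma fsuppFn_add (A B : Set (Fin n → ℝ)) (x : Fin n → ℝ) :
    fsuppFn (A + B) x = fsuppFn A x + fsuppFn B x := by
  refine le_antisymm (iSup₂_le ?_) (EReal.add_le_of_forall_lt fun a' ha' b' hb' => ?_)
  · rintro _ ⟨a, ha, b, hb, rfl⟩
    rw [add_dotProduct, EReal.coe_add]
    exact add_le_add (le_biSup (fun a => ((a ⬝ᵥ x : ℝ) : EReal)) ha)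
      (le_biSup (fun b => ((b ⬝ᵥ x : ℝ) : EReal)) hb)
  · obtain ⟨a, ha, hlt⟩ := lt_biSup_iff.1 ha'
    obtain ⟨b, hb, hlt'⟩ := lt_biSup_iff.1 hb'
    calc a' + b' ≤ (((a + b) ⬝ᵥ x : ℝ) : EReal) := by
          rw [add_dotProduct, EReal.coe_add]; exact add_le_add hlt.le hlt'.le
      _ ≤ fsuppFn (A + B) x :=
          le_biSup (fun c => ((c ⬝ᵥ x : ℝ) : EReal)) (Set.add_mem_add ha hb)

lemma fsuppFn_finset_sum (J : Finset ι) (A : ι → Set (Fin n → ℝ)) (x : Fin n → ℝ) :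
    fsuppFn (∑ j ∈ J, A j) x = ∑ j ∈ J, fsuppFn (A j) x :=
  map_sum (⟨⟨(fsuppFn · x), fsuppFn_zero x⟩, fun A B => fsuppFn_add A B x⟩ :
    Set (Fin n → ℝ) →+ EReal) A J

lemma rsum_fsuppFn_sub (A : ι → Set (Fin n → ℝ)) (t : ι → ℝ) (x : Fin n → ℝ) :
    rsum (fun i x => fsuppFn (A i) x - (t i : EReal)) x =
      ⨆ (J : Finset ι) (_ : J.Nonempty),
        fsuppFn (∑ j ∈ J, A j) x + ((-∑ j ∈ J, t j : ℝ) : EReal) := by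
  simp only [rsum, sub_eq_add_neg, Finset.sum_add_distrib, fsuppFn_finset_sum,
    ← Finset.sum_neg_distrib, EReal.coe_finset_sum, EReal.coe_neg]

lemma mem_fprimalSol_and_fprimalVal_eq {f : (Fin n → ℝ) → EReal} {p x₀ : Fin n → ℝ} {D : EReal}
    (hle : ∀ x, D ≤ f x - ((p ⬝ᵥ x : ℝ) : EReal)) (hx₀ : f x₀ - ((p ⬝ᵥ x₀ : ℝ) : EReal) ≤ D) :
    x₀ ∈ fprimalSol f p ∧ fprimalVal f p = D := by
  have hval : fprimalVal f p = D := le_antisymm (iInf_le_of_le x₀ hx₀) (le_iInf hle)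
  exact ⟨le_antisymm (hval ▸ hx₀) (iInf_le _ x₀), hval⟩

section Hypograph

variable {V : Type*} [AddCommGroup V]

def robustHypograph (A : ι → Set V) (t : ι → ℝ) : Set (V × ℝ) :=
  ⋃ J : {J : Finset ι // J.Nonempty}, (∑ j ∈ J.1, A j) ×ˢ Iic (-∑ j ∈ J.1, t j)

lemma mem_robustHypograph {A : ι → Set V} {t : ι → ℝ} {z : V × ℝ} :
    z ∈ robustHypograph A t ↔
      ∃ J : Finset ι, J.Nonempty ∧ z.1 ∈ ∑ j ∈ J, A j ∧ z.2 ≤ -∑ j ∈ J, t j := by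
  simp [robustHypograph, and_left_comm]

lemma convex_robustHypograph [Module ℝ V] {A : ι → Set V} {t : ι → ℝ}
    (hconv : ∀ i, Convex ℝ (A i)) (h0 : ∀ i, (0 : V) ∈ A i) (ht : ∀ i, t i ≤ 0) :
    Convex ℝ (robustHypograph A t) := by
  classical
  have hmono : Monotone fun J : Finset ι => (∑ j ∈ J, A j) ×ˢ Iic (-∑ j ∈ J, t j) :=
    fun J K hJK => prod_mono (Finset.sum_mono_set_of_nonneg (fun i => by simpa using h0 i) hJK)
      (Iic_subset_Iic.2 (neg_le_neg (Finset.sum_anti_set_of_nonpos' ht hJK)))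
  refine Directed.convex_iUnion (fun J K => ⟨⟨J.1 ∪ K.1, J.2.mono Finset.subset_union_left⟩,
    hmono Finset.subset_union_left, hmono Finset.subset_union_right⟩)
    fun J => (convex_sum _ fun i _ => hconv i).prod (convex_Iic _)

end Hypograph

section Duality

variable {A : ι → Set (Fin n → ℝ)} {t : ι → ℝ} {p : Fin n → ℝ}

lemma iSup_neg_sum_le_rsum_sub (x : Fin n → ℝ) :
    ⨆ (J : Finset ι) (_ : J.Nonempty) (_ : p ∈ ∑ j ∈ J, A j), ((-(∑ j ∈ J, t j) : ℝ) : EReal) ≤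
      rsum (fun i x => fsuppFn (A i) x - (t i : EReal)) x - ((p ⬝ᵥ x : ℝ) : EReal) := by
  refine iSup₂_le fun J hJ => iSup_le fun hp => ?_
  rw [EReal.le_sub_iff_add_le (.inl (EReal.coe_ne_bot _)) (.inl (EReal.coe_ne_top _)),
    rsum_fsuppFn_sub]
  calc ((-∑ j ∈ J, t j : ℝ) : EReal) + ((p ⬝ᵥ x : ℝ) : EReal)
      ≤ fsuppFn (∑ j ∈ J, A j) x + ((-∑ j ∈ J, t j : ℝ) : EReal) := by
        rw [add_comm]
        exact add_le_add_left (le_biSup (fun a => ((a ⬝ᵥ x : ℝ) : EReal)) hp) _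
    _ ≤ _ := le_iSup₂ (f := fun (J : Finset ι) (_ : J.Nonempty) =>
        fsuppFn (∑ j ∈ J, A j) x + ((-∑ j ∈ J, t j : ℝ) : EReal)) J hJ

lemma rsum_sub_le_of_forall_mem_robustHypograph {x : Fin n → ℝ} {d : ℝ}
    (h : ∀ z ∈ robustHypograph A t, x ⬝ᵥ z.1 + z.2 ≤ x ⬝ᵥ p + d) :
    rsum (fun i x => fsuppFn (A i) x - (t i : EReal)) x - ((p ⬝ᵥ x : ℝ) : EReal) ≤ d := by
  rw [EReal.sub_le_iff_le_add (.inl (EReal.coe_ne_bot _)) (.inl (EReal.coe_ne_top _)),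
    rsum_fsuppFn_sub]
  refine iSup₂_le fun J hJ => ?_
  set c := -∑ j ∈ J, t j
  have hσ : fsuppFn (∑ j ∈ J, A j) x ≤ ((p ⬝ᵥ x + d - c : ℝ) : EReal) := by
    refine iSup₂_le fun a ha => EReal.coe_le_coe_iff.2 ?_
    have : x ⬝ᵥ a + c ≤ x ⬝ᵥ p + d := h (a, c) (mem_robustHypograph.2 ⟨J, hJ, ha, le_rfl⟩)
    rw [dotProduct_comm x a, dotProduct_comm x p] at this
    linarith
  calc _ ≤ ((p ⬝ᵥ x + d - c : ℝ) : EReal) + (c : EReal) := by gcongr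
    _ = (d : EReal) + ((p ⬝ᵥ x : ℝ) : EReal) := by norm_cast; ring_nf

lemma exists_rsum_sub_le_of_mem_intrinsicInterior (hconv : ∀ i, Convex ℝ (A i))
    (h0 : ∀ i, (0 : Fin n → ℝ) ∈ A i) (ht : ∀ i, t i ≤ 0)
    (hri : p ∈ intrinsicInterior ℝ (⋃ J ∈ {J : Finset ι | J.Nonempty}, ∑ j ∈ J, A j)) {d : ℝ}
    (hd : ∀ J : Finset ι, J.Nonempty → p ∈ ∑ j ∈ J, A j → -∑ j ∈ J, t j ≤ d) :
    ∃ x, rsum (fun i x => fsuppFn (A i) x - (t i : EReal)) x - ((p ⬝ᵥ x : ℝ) : EReal) ≤ d := by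
  have hEC : ∀ z ∈ robustHypograph A t, z.1 ∈ ⋃ J ∈ {J : Finset ι | J.Nonempty}, ∑ j ∈ J, A j := by
    intro z hz
    obtain ⟨J, hJ, hz1, -⟩ := mem_robustHypograph.1 hz
    exact mem_biUnion hJ hz1
  have hCE : ∀ a ∈ ⋃ J ∈ {J : Finset ι | J.Nonempty}, ∑ j ∈ J, A j, ∀ s ≤ 0,
      (a, s) ∈ robustHypograph A t := by
    intro a ha s hs
    obtain ⟨J, hJ, haJ⟩ : ∃ J : Finset ι, J.Nonempty ∧ a ∈ ∑ j ∈ J, A j := by simpa using ha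
    exact mem_robustHypograph.2
      ⟨J, hJ, haJ, hs.trans (neg_nonneg.2 (Finset.sum_nonpos fun i _ => ht i))⟩
  have hpd : ∀ s, (p, s) ∈ robustHypograph A t → s ≤ d := by
    intro s hs
    obtain ⟨J, hJ, hpJ, hsJ⟩ := mem_robustHypograph.1 hs
    exact hsJ.trans (hd J hJ hpJ)
  obtain ⟨φ, hφ⟩ := exists_dual_add_le_of_mem_intrinsicInterior
    (convex_robustHypograph hconv h0 ht) hEC hCE hri hpd
  set v := (dotProductEquiv ℝ (Fin n)).symm φ
  have hv : ∀ a, v ⬝ᵥ a = φ a := fun a => by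
    rw [← dotProductEquiv_apply_apply ℝ, LinearEquiv.apply_symm_apply]
  exact ⟨v, rsum_sub_le_of_forall_mem_robustHypograph fun z hz => by simpa only [hv] using hφ z hz⟩

end Duality

theorem subaffine_strong_duality_fin_general
    (A : ι → Set (Fin n → ℝ)) (t : ι → ℝ) (p : Fin n → ℝ)
    (hconv : ∀ i, Convex ℝ (A i))
    (h0 : ∀ i, (0 : Fin n → ℝ) ∈ A i) (ht : ∀ i, t i ≤ 0)
    (hri : p ∈ intrinsicInterior ℝ (⋃ J ∈ {J : Finset ι | J.Nonempty}, ∑ j ∈ J, A j)) :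
    (fprimalSol (rsum (fun i x => fsuppFn (A i) x - (t i : EReal))) p).Nonempty ∧
    fprimalVal (rsum (fun i x => fsuppFn (A i) x - (t i : EReal))) p =
      ⨆ (J : Finset ι) (_ : J.Nonempty) (_ : p ∈ ∑ j ∈ J, A j),
        ((-(∑ j ∈ J, t j) : ℝ) : EReal) := by
  set D := ⨆ (J : Finset ι) (_ : J.Nonempty) (_ : p ∈ ∑ j ∈ J, A j),
    ((-(∑ j ∈ J, t j) : ℝ) : EReal)
  have hle : ∀ J : Finset ι, J.Nonempty → p ∈ ∑ j ∈ J, A j → ((-∑ j ∈ J, t j : ℝ) : EReal) ≤ D :=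
    fun J hJ hpJ => le_iSup₂_of_le J hJ (le_iSup_of_le hpJ le_rfl)
  obtain ⟨x₀, hx₀⟩ : ∃ x, rsum (fun i x => fsuppFn (A i) x - (t i : EReal)) x -
      ((p ⬝ᵥ x : ℝ) : EReal) ≤ D := by
    by_cases hD : D = ⊤
    · exact ⟨0, hD ▸ le_top⟩
    obtain ⟨J₀, hJ₀, hpJ₀⟩ : ∃ J : Finset ι, J.Nonempty ∧ p ∈ ∑ j ∈ J, A j := by
      simpa using intrinsicInterior_subset hri
    rw [← EReal.coe_toReal hD (ne_bot_of_le_ne_bot (EReal.coe_ne_bot _) (hle J₀ hJ₀ hpJ₀))]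
    refine exists_rsum_sub_le_of_mem_intrinsicInterior hconv h0 ht hri fun J hJ hpJ => ?_
    exact EReal.toReal_le_toReal (hle J hJ hpJ) (EReal.coe_ne_bot _) hD
  obtain ⟨hsol, hval⟩ := mem_fprimalSol_and_fprimalVal_eq iSup_neg_sum_le_rsum_sub hx₀
  exact ⟨⟨x₀, hsol⟩, hval⟩

/-- **Proposition 5.3.** Let `(A i)_{i ∈ ι}` be closed convex subsets of `ℝⁿ` with
`0 ∈ ⋂ i, A i`, and `t i ≤ 0` for all `i`. Then for every
`x̄* ∈ ri (⋃_{J ∈ 𝓕(ι)} Σ_{j ∈ J} A j)`, the minimum of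
`Σ^R (σ_{A_i} − t_i) − ⟨x̄*, ·⟩` is attained and equals
`sup { −Σ_{j ∈ J} t j : J ∈ 𝓕(ι), x̄* ∈ Σ_{j ∈ J} A j }`. -/
theorem subaffine_strong_duality_fin [Nonempty ι]
    (A : ι → Set (Fin n → ℝ)) (t : ι → ℝ) (p : Fin n → ℝ)
    (hclosed : ∀ i, IsClosed (A i)) (hconv : ∀ i, Convex ℝ (A i))
    (h0 : ∀ i, (0 : Fin n → ℝ) ∈ A i) (ht : ∀ i, t i ≤ 0)
    (hri : p ∈ intrinsicInterior ℝ (⋃ J ∈ {J : Finset ι | J.Nonempty}, ∑ j ∈ J, A j)) :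
    (fprimalSol (rsum (fun i x => fsuppFn (A i) x - (t i : EReal))) p).Nonempty ∧
    fprimalVal (rsum (fun i x => fsuppFn (A i) x - (t i : EReal))) p =
      ⨆ (J : Finset ι) (_ : J.Nonempty) (_ : p ∈ ∑ j ∈ J, A j),
        ((-(∑ j ∈ J, t j) : ℝ) : EReal) :=
  subaffine_strong_duality_fin_general A t p hconv h0 ht hri
end
end

section
/- Let (f_i)_{i∈I} be a family of proper lower semicontinuous convex functions from ℝⁿ to ℝ∪{+∞} such that the system {f_i(x) ≤ 0, i ∈ I} is inconsistent, f₀ := sup_{i∈I} f_i has nonempty domain, and 0 ∈ ri co(⋃_{i∈I} dom f_i*). Then the set ℓ∞-sol(S) of minimizers of f₀ is the sum of a nonempty convex compact subset of ℝⁿ and a linear subspace of ℝⁿ. -/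
open scoped Pointwise Topology
open Set Matrix

noncomputable section

variable {n : ℕ} {ι : Type*}

/-! ### Auxiliary lemmas -/

lemma ereal_cases (x : EReal) : x = ⊥ ∨ (∃ r : ℝ, x = (r : EReal)) ∨ x = ⊤ := by
  induction x using EReal.rec with
  | bot => exact Or.inl rfl
  | coe r => exact Or.inr (Or.inl ⟨r, rfl⟩)
  | top => exact Or.inr (Or.inr rfl)

lemma exists_real {x : EReal} (h1 : x ≠ ⊤) (h2 : x ≠ ⊥) : ∃ r : ℝ, x = (r : EReal) := by
  rcases ereal_cases x with h | h | h
  · exact absurd h h2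
  · exact h
  · exact absurd h h1

lemma fconj_le_of_minorant {f : (Fin n → ℝ) → EReal} {q : Fin n → ℝ} {β : ℝ}
    (h : ∀ y, ((q ⬝ᵥ y - β : ℝ) : EReal) ≤ f y) : fconj f q ≤ (β : EReal) := by
  refine iSup_le fun x => ?_
  have hx := h x
  rcases ereal_cases (f x) with hfx | ⟨a, hfx⟩ | hfx
  · rw [hfx] at hx; exact absurd (le_bot_iff.mp hx) (EReal.coe_ne_bot _)
  · rw [hfx] at hx ⊢
    rw [EReal.coe_le_coe_iff] at hx
    rw [← EReal.coe_sub, EReal.coe_le_coe_iff]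
    linarith
  · rw [hfx, EReal.sub_top]; exact bot_le

lemma minorant_of_fconj {f : (Fin n → ℝ) → EReal} {q : Fin n → ℝ}
    (hq : fconj f q ≠ ⊤) {x₁ : Fin n → ℝ} (h1 : f x₁ ≠ ⊤) (h2 : f x₁ ≠ ⊥) :
    ∃ β : ℝ, ∀ y, ((q ⬝ᵥ y - β : ℝ) : EReal) ≤ f y := by
  have hb : fconj f q ≠ ⊥ := by
    obtain ⟨r, hr⟩ := exists_real h1 h2
    have hle : ((q ⬝ᵥ x₁ - r : ℝ) : EReal) ≤ fconj f q := by
      have h3 := le_iSup (fun x => ((q ⬝ᵥ x : ℝ) : EReal) - f x) x₁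
      rw [hr] at h3
      rw [EReal.coe_sub]
      exact h3
    intro hbot
    rw [hbot, le_bot_iff] at hle
    exact EReal.coe_ne_bot _ hle
  obtain ⟨β, hβ⟩ := exists_real hq hb
  refine ⟨β, fun y => ?_⟩
  have hle : ((q ⬝ᵥ y : ℝ) : EReal) - f y ≤ (β : EReal) := by
    rw [← hβ]; exact le_iSup (fun x => ((q ⬝ᵥ x : ℝ) : EReal) - f x) y
  rcases ereal_cases (f y) with hfy | ⟨a, hfy⟩ | hfy
  · rw [hfy, EReal.coe_sub_bot, top_le_iff] at hle; exact absurd hle (by simp)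
  · rw [hfy] at hle ⊢
    rw [← EReal.coe_sub, EReal.coe_le_coe_iff] at hle
    rw [EReal.coe_le_coe_iff]
    linarith
  · rw [hfy]; exact le_top

lemma isClosed_epi {f : (Fin n → ℝ) → EReal} (h : LowerSemicontinuous f) :
    IsClosed {q : (Fin n → ℝ) × ℝ | f q.1 ≤ (q.2 : EReal)} := by
  rw [← isOpen_compl_iff]
  rw [isOpen_iff_mem_nhds]
  rintro ⟨x, r⟩ hxr
  simp only [mem_compl_iff, mem_setOf_eq, not_le] at hxr
  obtain ⟨c, hrc, hcf⟩ := EReal.exists_between_coe_real hxr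
  have h1 : ∀ᶠ x' in 𝓝 x, (c : EReal) < f x' := h x _ hcf
  have h2 : ∀ᶠ t in 𝓝 r, t < c := by
    have : r < c := by exact_mod_cast hrc
    exact Filter.Tendsto.eventually_lt_const this Filter.tendsto_id -- maybe wrong
  have := (h1.prod_nhds h2 : ∀ᶠ q : (Fin n → ℝ) × ℝ in 𝓝 (x, r), (c : EReal) < f q.1 ∧ q.2 < c)
  exact this.mono fun q ⟨hq1, hq2⟩ => by
    simp only [mem_compl_iff, mem_setOf_eq, not_le]
    calc ((q.2 : ℝ) : EReal) < (c : EReal) := by exact_mod_cast hq2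
    _ < f q.1 := hq1

lemma sep_lemma (f : (Fin n → ℝ) → EReal) (hl : LowerSemicontinuous f) (hc : EConvexFn f)
    {x : Fin n → ℝ} {r : ℝ} (hx : ¬ f x ≤ (r : EReal))
    {y₀ : Fin n → ℝ} {t₀ : ℝ} (h₀ : f y₀ ≤ (t₀ : EReal)) :
    ∃ (p : Fin n → ℝ) (s u : ℝ), s ≤ 0 ∧ (∀ (y : Fin n → ℝ) (t : ℝ), f y ≤ (t : EReal) → p ⬝ᵥ y + s * t < u) ∧
      u < p ⬝ᵥ x + s * r := by
  have hclosed : IsClosed {q : (Fin n → ℝ) × ℝ | f q.1 ≤ (q.2 : EReal)} := isClosed_epi hl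
  have hnotmem : (x, r) ∉ {q : (Fin n → ℝ) × ℝ | f q.1 ≤ (q.2 : EReal)} := hx
  obtain ⟨φ, u, hφ1, hφ2⟩ := geometric_hahn_banach_closed_point hc hclosed hnotmem
  set ψ : (Fin n → ℝ) →ₗ[ℝ] ℝ := φ.toLinearMap.comp (LinearMap.inl ℝ (Fin n → ℝ) ℝ) with hψ
  set p : Fin n → ℝ := fun i => ψ (fun j => if i = j then 1 else 0) with hp
  set s : ℝ := φ (0, 1) with hs
  have hdecomp : ∀ (y : Fin n → ℝ) (t : ℝ), φ (y, t) = p ⬝ᵥ y + s * t := by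
    intro y t
    have h1 : (y, t) = (y, (0 : ℝ)) + t • ((0 : Fin n → ℝ), (1 : ℝ)) := by
      simp [Prod.ext_iff]
    rw [h1, map_add, φ.map_smul, smul_eq_mul]
    congr 1
    · show ψ y = p ⬝ᵥ y
      rw [LinearMap.pi_apply_eq_sum_univ ψ y]
      rw [dotProduct]
      exact Finset.sum_congr rfl fun i _ => by rw [hp, smul_eq_mul, mul_comm]
    · rw [mul_comm]
  have key : ∀ (y : Fin n → ℝ) (t : ℝ), f y ≤ (t : EReal) → p ⬝ᵥ y + s * t < u := by
    intro y t hyt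
    have := hφ1 (y, t) hyt
    rwa [hdecomp] at this
  have hxr : u < p ⬝ᵥ x + s * r := by rw [← hdecomp]; exact hφ2
  refine ⟨p, s, u, ?_, key, hxr⟩
  by_contra hspos
  push_neg at hspos
  set k : ℝ := max 0 ((u - p ⬝ᵥ y₀ - s * t₀) / s) + 1 with hk
  have hk0 : 0 ≤ k := by positivity
  have hmem : f y₀ ≤ ((t₀ + k : ℝ) : EReal) := le_trans h₀ (by exact_mod_cast by linarith)
  have hlt := key y₀ (t₀ + k) hmem
  have hkgt : (u - p ⬝ᵥ y₀ - s * t₀) / s < k := by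
    calc (u - p ⬝ᵥ y₀ - s * t₀) / s ≤ max 0 ((u - p ⬝ᵥ y₀ - s * t₀) / s) := le_max_right _ _
    _ < k := by rw [hk]; linarith
  have : u - p ⬝ᵥ y₀ - s * t₀ < s * k := by
    rw [div_lt_iff₀ hspos] at hkgt; linarith [hkgt]
  nlinarith [hlt]

lemma minorant_of_sep {f : (Fin n → ℝ) → EReal} {p : Fin n → ℝ} {s u : ℝ} (hs : s < 0)
    (hsep : ∀ (y : Fin n → ℝ) (t : ℝ), f y ≤ (t : EReal) → p ⬝ᵥ y + s * t < u)
    (hbot : ∀ y, f y ≠ ⊥) :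
    ∀ y, ((((-s)⁻¹ • p) ⬝ᵥ y - u / (-s) : ℝ) : EReal) ≤ f y := by
  intro y
  rcases ereal_cases (f y) with hfy | ⟨a, hfy⟩ | hfy
  · exact absurd hfy (hbot y)
  · have h1 := hsep y a (le_of_eq hfy)
    rw [hfy, EReal.coe_le_coe_iff]
    rw [smul_dotProduct, smul_eq_mul]
    have hσ : 0 < -s := by linarith
    rw [sub_le_iff_le_add, inv_mul_le_iff₀ hσ]
    have hexp : -s * (a + u / -s) = -s * a + u := by
      rw [mul_add, mul_comm (-s) (u / -s), div_mul_cancel₀ u (ne_of_gt hσ)]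
    rw [hexp]
    linarith
  · rw [hfy]; exact le_top

lemma exists_minorant (f : (Fin n → ℝ) → EReal) (hp : EProper f) (hl : LowerSemicontinuous f)
    (hc : EConvexFn f) :
    ∃ (q : Fin n → ℝ) (β : ℝ), ∀ y, ((q ⬝ᵥ y - β : ℝ) : EReal) ≤ f y := by
  obtain ⟨x₁, hx₁⟩ := hp.2
  obtain ⟨r₁, hr₁⟩ := exists_real hx₁ (hp.1 x₁)
  have hx : ¬ f x₁ ≤ ((r₁ - 1 : ℝ) : EReal) := by
    rw [hr₁, EReal.coe_le_coe_iff]; push_neg; linarith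
  obtain ⟨p, s, u, hs0, hsep, hxs⟩ := sep_lemma f hl hc hx (le_of_eq hr₁)
  have hslt : s < 0 := by
    rcases lt_or_eq_of_le hs0 with h | h
    · exact h
    · exfalso
      have h1 := hsep x₁ r₁ (le_of_eq hr₁)
      rw [h] at h1 hxs
      simp only [zero_mul, add_zero] at h1 hxs
      linarith
  exact ⟨(-s)⁻¹ • p, u / (-s), minorant_of_sep hslt hsep hp.1⟩

lemma invar_le (f : (Fin n → ℝ) → EReal) (hp : EProper f) (hl : LowerSemicontinuous f)
    (hc : EConvexFn f) {v : Fin n → ℝ} (hv : ∀ q, fconj f q ≠ ⊤ → q ⬝ᵥ v = 0)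
    (x : Fin n → ℝ) : f (x + v) ≤ f x := by
  rcases ereal_cases (f x) with hfx | ⟨r, hfx⟩ | hfx
  · exact absurd hfx (hp.1 x)
  · rw [hfx]
    by_contra hcon
    push_neg at hcon
    have hx : ¬ f (x + v) ≤ ((r : ℝ) : EReal) := not_le.mpr hcon
    obtain ⟨p, s, u, hs0, hsep, hxs⟩ := sep_lemma f hl hc hx (le_of_eq hfx)
    have hepix := hsep x r (le_of_eq hfx)
    have hpv : 0 < p ⬝ᵥ v := by
      have h1 : p ⬝ᵥ (x + v) = p ⬝ᵥ x + p ⬝ᵥ v := dotProduct_add _ _ _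
      rw [h1] at hxs
      linarith
    rcases lt_or_eq_of_le hs0 with hslt | hseq
    · -- s < 0
      have hmin := minorant_of_sep hslt hsep hp.1
      have hdom : fconj f ((-s)⁻¹ • p) ≠ ⊤ := by
        have := fconj_le_of_minorant hmin
        exact fun h => by rw [h, top_le_iff] at this; exact EReal.coe_ne_top _ this
      have h0 := hv _ hdom
      rw [smul_dotProduct, smul_eq_mul] at h0
      have hσ : (0:ℝ) < -s := by linarith
      have hne : (-s)⁻¹ ≠ 0 := inv_ne_zero (by linarith)
      have : p ⬝ᵥ v = 0 := (mul_eq_zero.mp h0).resolve_left hne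
      linarith
    · -- s = 0
      obtain ⟨q₀, β₀, hq₀⟩ := exists_minorant f hp hl hc
      have hmin : ∀ y, (((q₀ + p) ⬝ᵥ y - (β₀ + u) : ℝ) : EReal) ≤ f y := by
        intro y
        rcases ereal_cases (f y) with hfy | ⟨a, hfy⟩ | hfy
        · exact absurd hfy (hp.1 y)
        · have h1 := hq₀ y
          have h2 := hsep y a (le_of_eq hfy)
          rw [hseq, zero_mul, add_zero] at h2
          rw [hfy, EReal.coe_le_coe_iff] at h1 ⊢
          rw [add_dotProduct]
          linarith
        · rw [hfy]; exact le_top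
      have hdom : fconj f (q₀ + p) ≠ ⊤ := by
        have := fconj_le_of_minorant hmin
        exact fun h => by rw [h, top_le_iff] at this; exact EReal.coe_ne_top _ this
      have hdom₀ : fconj f q₀ ≠ ⊤ := by
        have := fconj_le_of_minorant hq₀
        exact fun h => by rw [h, top_le_iff] at this; exact EReal.coe_ne_top _ this
      have h1 := hv _ hdom
      have h2 := hv _ hdom₀
      rw [add_dotProduct, h2, zero_add] at h1
      linarith
  · rw [hfx]; exact le_top

lemma invar_eq (f : (Fin n → ℝ) → EReal) (hp : EProper f) (hl : LowerSemicontinuous f)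
    (hc : EConvexFn f) {v : Fin n → ℝ} (hv : ∀ q, fconj f q ≠ ⊤ → q ⬝ᵥ v = 0)
    (x : Fin n → ℝ) : f (x + v) = f x := by
  refine le_antisymm (invar_le f hp hl hc hv x) ?_
  have hv' : ∀ q, fconj f q ≠ ⊤ → q ⬝ᵥ (-v) = 0 := by
    intro q hq
    rw [dotProduct_neg, hv q hq, neg_zero]
  have := invar_le f hp hl hc hv' (x + v)
  simpa using this

lemma lsc_exists_min {g : (Fin n → ℝ) → EReal} (hg : LowerSemicontinuous g)
    {S : Set (Fin n → ℝ)} (hS : IsCompact S) (hne : S.Nonempty) :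
    ∃ z ∈ S, ∀ y ∈ S, g z ≤ g y := by
  haveI : Nonempty S := hne.to_subtype
  set F : S → Set (Fin n → ℝ) := fun y => {x ∈ S | g x ≤ g y.1} with hF
  have hclosed : ∀ y : S, IsClosed (F y) :=
    fun y => (hS.isClosed.inter (hg.isClosed_preimage (g y.1)) : _)
  have hcompact : ∀ y : S, IsCompact (F y) :=
    fun y => hS.of_isClosed_subset (hclosed y) (fun x hx => hx.1)
  have hney : ∀ y : S, (F y).Nonempty := fun y => ⟨y.1, y.2, le_refl _⟩
  have hdir : Directed (· ⊇ ·) F := by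
    intro y z
    rcases le_total (g y.1) (g z.1) with h | h
    · exact ⟨y, subset_refl _, fun x hx => ⟨hx.1, le_trans hx.2 h⟩⟩
    · exact ⟨z, fun x hx => ⟨hx.1, le_trans hx.2 h⟩, subset_refl _⟩
  obtain ⟨z, hz⟩ := IsCompact.nonempty_iInter_of_directed_nonempty_isCompact_isClosed
    F hdir hney hcompact hclosed
  simp only [mem_iInter] at hz
  have hzS : z ∈ S := (hz ⟨hne.choose, hne.choose_spec⟩).1
  exact ⟨z, hzS, fun y hy => (hz ⟨y, hy⟩).2⟩

lemma convex_minorant_set (g : (Fin n → ℝ) → EReal) :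
    Convex ℝ {p : Fin n → ℝ | ∃ β : ℝ, ∀ y, ((p ⬝ᵥ y - β : ℝ) : EReal) ≤ g y} := by
  rintro p₁ ⟨β₁, h₁⟩ p₂ ⟨β₂, h₂⟩ a b ha hb hab
  refine ⟨a * β₁ + b * β₂, fun y => ?_⟩
  rcases ereal_cases (g y) with hgy | ⟨c, hgy⟩ | hgy
  · exact absurd (le_bot_iff.mp (hgy ▸ h₁ y)) (EReal.coe_ne_bot _)
  · have e1 := h₁ y; have e2 := h₂ y
    rw [hgy, EReal.coe_le_coe_iff] at e1 e2 ⊢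
    have m1 := mul_le_mul_of_nonneg_left e1 ha
    have m2 := mul_le_mul_of_nonneg_left e2 hb
    rw [add_dotProduct, smul_dotProduct, smul_dotProduct, smul_eq_mul, smul_eq_mul]
    have hc' : a * c + b * c = c := by rw [← add_mul, hab, one_mul]
    linarith
  · rw [hgy]; exact le_top

lemma convex_sublevel {f : (Fin n → ℝ) → EReal} (hc : EConvexFn f) (r : ℝ) :
    Convex ℝ {x : Fin n → ℝ | f x ≤ (r : EReal)} := by
  intro x hx y hy a b ha hb hab
  have hmem := hc (show ((x, r) : (Fin n → ℝ) × ℝ) ∈ _ from hx)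
    (show ((y, r) : (Fin n → ℝ) × ℝ) ∈ _ from hy) ha hb hab
  have h2 : a • r + b • r = r := by rw [smul_eq_mul, smul_eq_mul, ← add_mul, hab, one_mul]
  have heq : a • ((x, r) : (Fin n → ℝ) × ℝ) + b • (y, r) = (a • x + b • y, r) := by
    rw [Prod.smul_mk, Prod.smul_mk, Prod.mk_add_mk, h2]
  rw [heq] at hmem
  exact hmem

lemma bounded_sublevel {g : (Fin n → ℝ) → EReal} {C : Set (Fin n → ℝ)}
    {W : Submodule ℝ (Fin n → ℝ)} {ε : ℝ} (hε : 0 < ε)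
    (hball : ∀ w : Fin n → ℝ, w ∈ W → ‖w‖ < ε → w ∈ C)
    (hCD : ∀ p ∈ C, ∃ β : ℝ, ∀ y, ((p ⬝ᵥ y - β : ℝ) : EReal) ≤ g y) (c : ℝ) :
    Bornology.IsBounded {w : Fin n → ℝ | w ∈ W ∧ g w ≤ (c : EReal)} := by
  by_contra hnb
  have hseq : ∀ k : ℕ, ∃ w : Fin n → ℝ, (w ∈ W ∧ g w ≤ (c : EReal)) ∧ (k : ℝ) < ‖w‖ := by
    intro k
    by_contra hcon; push_neg at hcon
    exact hnb (isBounded_iff_forall_norm_le.mpr ⟨k, fun x hx => hcon x hx⟩)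
  choose w hw hwn using hseq
  have hwpos : ∀ k, 0 < ‖w k‖ := fun k => lt_of_le_of_lt (Nat.cast_nonneg k) (hwn k)
  set uu : ℕ → Fin n → ℝ := fun k => ‖w k‖⁻¹ • w k with huu
  have huun : ∀ k, ‖uu k‖ = 1 := by
    intro k
    rw [huu]
    simp only [norm_smul, norm_inv, norm_norm]
    exact inv_mul_cancel₀ (ne_of_gt (hwpos k))
  have hbnd : ∀ k, uu k ∈ Metric.closedBall (0 : Fin n → ℝ) 1 := by
    intro k; rw [Metric.mem_closedBall, dist_zero_right, huun k]
  obtain ⟨d, _, φ, hφ, hlim⟩ := tendsto_subseq_of_bounded Metric.isBounded_closedBall hbnd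
  have hdW : d ∈ W := by
    have hWc : IsClosed (W : Set (Fin n → ℝ)) := W.closed_of_finiteDimensional
    exact hWc.mem_of_tendsto hlim
      (Filter.Eventually.of_forall fun k => W.smul_mem _ (hw (φ k)).1)
  have hdn : ‖d‖ = 1 := by
    have h1 : Filter.Tendsto (fun k => ‖uu (φ k)‖) Filter.atTop (𝓝 ‖d‖) := hlim.norm
    have h2 : Filter.Tendsto (fun _ : ℕ => (1 : ℝ)) Filter.atTop (𝓝 ‖d‖) := by
      refine h1.congr fun k => huun (φ k)
    exact tendsto_nhds_unique h2 tendsto_const_nhds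
  have hdd : 0 < d ⬝ᵥ d := by
    have hd0 : d ≠ 0 := fun h => by rw [h, norm_zero] at hdn; linarith
    have : 0 ≤ d ⬝ᵥ d := Finset.sum_nonneg fun i _ => mul_self_nonneg _
    rcases this.lt_or_eq with h | h
    · exact h
    · exfalso
      apply hd0
      funext i
      have := (Finset.sum_eq_zero_iff_of_nonneg (fun i _ => mul_self_nonneg (d i))).mp h.symm
      have hi := this i (Finset.mem_univ i)
      exact mul_self_eq_zero.mp hi
  set pd : Fin n → ℝ := (ε / 2) • d with hpd
  have hpdC : pd ∈ C := by
    refine hball pd (W.smul_mem _ hdW) ?_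
    rw [hpd, norm_smul, hdn, mul_one, Real.norm_eq_abs, abs_of_pos (by linarith)]
    linarith
  obtain ⟨β, hβ⟩ := hCD pd hpdC
  have hpdd : 0 < pd ⬝ᵥ d := by
    rw [hpd, smul_dotProduct, smul_eq_mul]
    positivity
  have hcont : Continuous fun y : Fin n → ℝ => pd ⬝ᵥ y := by
    unfold dotProduct
    exact continuous_finset_sum _ fun i _ => continuous_const.mul (continuous_apply i)
  have hlim2 : Filter.Tendsto (fun k => pd ⬝ᵥ uu (φ k)) Filter.atTop (𝓝 (pd ⬝ᵥ d)) :=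
    (hcont.continuousAt.tendsto).comp hlim
  have heven : ∀ᶠ k in Filter.atTop, pd ⬝ᵥ d / 2 < pd ⬝ᵥ uu (φ k) :=
    hlim2.eventually (eventually_gt_nhds (by linarith))
  obtain ⟨K₀, hK₀⟩ := Filter.eventually_atTop.mp heven
  obtain ⟨k₁, hk₁⟩ := exists_nat_gt ((c + β) / (pd ⬝ᵥ d / 2))
  set k := max K₀ k₁ with hk
  have h1 : pd ⬝ᵥ d / 2 < pd ⬝ᵥ uu (φ k) := hK₀ k (le_max_left _ _)
  have hub : pd ⬝ᵥ w (φ k) ≤ c + β := by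
    have ha := hβ (w (φ k))
    have hb := (hw (φ k)).2
    have := le_trans ha hb
    rw [EReal.coe_le_coe_iff] at this
    linarith
  have hweq : w (φ k) = ‖w (φ k)‖ • uu (φ k) := by
    rw [huu, smul_smul, mul_inv_cancel₀ (ne_of_gt (hwpos (φ k))), one_smul]
  have hdot : pd ⬝ᵥ w (φ k) = ‖w (φ k)‖ * (pd ⬝ᵥ uu (φ k)) := by
    conv_lhs => rw [hweq]
    rw [dotProduct_smul, smul_eq_mul]
  have hnk : (k : ℝ) < ‖w (φ k)‖ :=
    lt_of_le_of_lt (Nat.cast_le.mpr (hφ.le_apply)) (hwn (φ k))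
  have hklarge : (c + β) / (pd ⬝ᵥ d / 2) < (k : ℝ) :=
    lt_of_lt_of_le hk₁ (Nat.cast_le.mpr (le_max_right _ _))
  have hfin : (c + β) < ‖w (φ k)‖ * (pd ⬝ᵥ d / 2) := by
    rw [div_lt_iff₀ (by linarith : (0:ℝ) < pd ⬝ᵥ d / 2)] at hklarge
    calc (c + β) < (k : ℝ) * (pd ⬝ᵥ d / 2) := hklarge
    _ ≤ ‖w (φ k)‖ * (pd ⬝ᵥ d / 2) := by
        apply mul_le_mul_of_nonneg_right (le_of_lt hnk) (by linarith)
  have : ‖w (φ k)‖ * (pd ⬝ᵥ d / 2) < ‖w (φ k)‖ * (pd ⬝ᵥ uu (φ k)) :=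
    mul_lt_mul_of_pos_left h1 (hwpos (φ k))
  rw [← hdot] at this
  linarith

/-- **Corollary 6.1.** Let `(f i)_{i ∈ ι} ⊆ Γ(ℝⁿ)` with `{f i x ≤ 0, i ∈ ι}` inconsistent,
`f₀ = sup_i f i` of nonempty domain, and `0 ∈ ri co (⋃ i, dom f_i*)`. Then the set of
minimizers of `f₀` is the sum of a nonempty convex compact set and a linear subspace
of `ℝⁿ`. -/
theorem linfty_sol_structure_fin [Nonempty ι] (f : ι → (Fin n → ℝ) → EReal)
    (hproper : ∀ i, EProper (f i)) (hlsc : ∀ i, LowerSemicontinuous (f i))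
    (hconv : ∀ i, EConvexFn (f i))
    (hinc : ¬∃ x : Fin n → ℝ, ∀ i, f i x ≤ 0)
    (hdom : ∃ x : Fin n → ℝ, (⨆ i, f i x) ≠ ⊤)
    (hri : (0 : Fin n → ℝ) ∈ intrinsicInterior ℝ (convexHull ℝ (⋃ i, fdomStar (f i)))) :
    ∃ (K : Set (Fin n → ℝ)) (V : Submodule ℝ (Fin n → ℝ)),
      K.Nonempty ∧ Convex ℝ K ∧ IsCompact K ∧
      {x : Fin n → ℝ | (⨆ i, f i x) = ⨅ y : Fin n → ℝ, ⨆ i, f i y}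
        = K + (V : Set (Fin n → ℝ)) := by
  classical
  obtain ⟨i₀⟩ := ‹Nonempty ι›
  set g : (Fin n → ℝ) → EReal := fun x => ⨆ i, f i x with hg
  have hgoal : {x : Fin n → ℝ | (⨆ i, f i x) = ⨅ y : Fin n → ℝ, ⨆ i, f i y}
      = {x : Fin n → ℝ | g x = ⨅ y : Fin n → ℝ, g y} := rfl
  rw [hgoal]
  have hfg : ∀ i x, f i x ≤ g x := fun i x => le_iSup (fun i => f i x) i
  have hgbot : ∀ x, g x ≠ ⊥ := fun x h =>
    (hproper i₀).1 x (le_bot_iff.mp (h ▸ hfg i₀ x))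
  have hglsc : LowerSemicontinuous g := lowerSemicontinuous_iSup fun i => hlsc i
  set C : Set (Fin n → ℝ) := convexHull ℝ (⋃ i, fdomStar (f i)) with hC
  have hCD : ∀ p ∈ C, ∃ β : ℝ, ∀ y, ((p ⬝ᵥ y - β : ℝ) : EReal) ≤ g y := by
    have hsub : C ⊆ {p : Fin n → ℝ | ∃ β : ℝ, ∀ y, ((p ⬝ᵥ y - β : ℝ) : EReal) ≤ g y} := by
      refine convexHull_min ?_ (convex_minorant_set g)
      rintro p hp
      simp only [mem_iUnion] at hp
      obtain ⟨i, hpi⟩ := hp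
      obtain ⟨x₁, hx₁⟩ := (hproper i).2
      obtain ⟨β, hβ⟩ := minorant_of_fconj hpi hx₁ ((hproper i).1 x₁)
      exact ⟨β, fun y => le_trans (hβ y) (hfg i y)⟩
    exact fun p hp => hsub hp
  have h0C : (0 : Fin n → ℝ) ∈ C := intrinsicInterior_subset hri
  set W : Submodule ℝ (Fin n → ℝ) := Submodule.span ℝ C with hW
  have hCW : C ⊆ (W : Set (Fin n → ℝ)) := Submodule.subset_span
  have hspanSet : ((affineSpan ℝ C : Set (Fin n → ℝ))) = (W : Set (Fin n → ℝ)) := by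
    rw [hW, ← affineSpan_insert_zero, Set.insert_eq_of_mem h0C]
  obtain ⟨ε, hε, hball⟩ : ∃ ε > 0, ∀ w : Fin n → ℝ, w ∈ W → ‖w‖ < ε → w ∈ C := by
    obtain ⟨y, hy, hy0⟩ := mem_intrinsicInterior.mp hri
    rw [mem_interior_iff_mem_nhds, mem_nhds_subtype] at hy
    obtain ⟨t, ht, hts⟩ := hy
    rw [hy0] at ht
    obtain ⟨ε, hε, hεt⟩ := Metric.mem_nhds_iff.mp ht
    refine ⟨ε, hε, fun w hwW hwn => ?_⟩
    have hwa : w ∈ affineSpan ℝ C := by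
      rw [← SetLike.mem_coe, hspanSet]; exact hwW
    have hmemt : (⟨w, hwa⟩ : affineSpan ℝ C).1 ∈ t := by
      apply hεt
      rw [Metric.mem_ball, dist_zero_right]
      exact hwn
    exact hts hmemt
  -- the linear subspace V
  set V : Submodule ℝ (Fin n → ℝ) :=
    { carrier := {v | ∀ i, ∀ p : Fin n → ℝ, fconj (f i) p ≠ ⊤ → p ⬝ᵥ v = 0}
      add_mem' := by
        intro a b ha hb i p hp
        rw [dotProduct_add, ha i p hp, hb i p hp, add_zero]
      zero_mem' := by
        intro i p hp
        rw [dotProduct_zero]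
      smul_mem' := by
        intro c a ha i p hp
        rw [dotProduct_smul, ha i p hp, smul_zero] } with hV
  have hVinv : ∀ v ∈ V, ∀ x, g (x + v) = g x := by
    intro v hv x
    exact iSup_congr fun i =>
      invar_eq (f i) (hproper i) (hlsc i) (hconv i) (fun q hq => hv i q hq) x
  have hperpV : ∀ v : Fin n → ℝ, (∀ w ∈ W, w ⬝ᵥ v = 0) → v ∈ V := by
    intro v h i p hp
    exact h p (hCW (subset_convexHull ℝ _ (mem_iUnion.mpr ⟨i, hp⟩)))
  have hdecomp : ∀ x : Fin n → ℝ, ∃ w ∈ W, ∃ v ∈ V, w + v = x := by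
    intro x
    set e : EuclideanSpace ℝ (Fin n) ≃ₗ[ℝ] (Fin n → ℝ) := WithLp.linearEquiv 2 ℝ _ with he
    set W' : Submodule ℝ (EuclideanSpace ℝ (Fin n)) := W.comap e.toLinearMap with hW'
    have hsup : W' ⊔ W'ᗮ = ⊤ :=
      Submodule.isCompl_orthogonal_of_hasOrthogonalProjection.sup_eq_top
    have hx : e.symm x ∈ W' ⊔ W'ᗮ := by rw [hsup]; trivial
    obtain ⟨a, ha, b, hb, hab⟩ := Submodule.mem_sup.mp hx
    have haW : e a ∈ W := ha
    refine ⟨e a, haW, e b, ?_, by rw [← map_add, hab, e.apply_symm_apply]⟩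
    refine hperpV (e b) fun w hw => ?_
    have hwW' : e.symm w ∈ W' := by
      rw [hW', Submodule.mem_comap]
      simpa using hw
    have hinner := (Submodule.mem_orthogonal W' b).mp hb (e.symm w) hwW'
    have hdot : w ⬝ᵥ e b = (inner ℝ (e.symm w) b : ℝ) := by
      rw [PiLp.inner_apply, dotProduct]
      simp [RCLike.inner_apply]
      exact Finset.sum_congr rfl fun i _ => mul_comm _ _
    rw [hdot, hinner]
  -- compactness of the sublevel sets within W
  have hlevelclosed : ∀ c : ℝ, IsClosed {w : Fin n → ℝ | w ∈ W ∧ g w ≤ (c : EReal)} := by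
    intro c
    have h1 : {w : Fin n → ℝ | w ∈ W ∧ g w ≤ (c : EReal)}
        = (W : Set (Fin n → ℝ)) ∩ g ⁻¹' Iic (c : EReal) := rfl
    rw [h1]
    exact W.closed_of_finiteDimensional.inter (hglsc.isClosed_preimage _)
  have hlevelcompact : ∀ c : ℝ, IsCompact {w : Fin n → ℝ | w ∈ W ∧ g w ≤ (c : EReal)} :=
    fun c => Metric.isCompact_of_isClosed_isBounded (hlevelclosed c)
      (bounded_sublevel hε hball hCD c)
  -- a finite value point inside W
  obtain ⟨x₀, hx₀⟩ := hdom
  obtain ⟨w₀, hw₀W, v₀, hv₀V, hwv₀⟩ := hdecomp x₀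
  have hgw₀ : g w₀ = g x₀ := by rw [← hwv₀]; exact (hVinv v₀ hv₀V w₀).symm
  obtain ⟨c₀, hc₀⟩ : ∃ c₀ : ℝ, g w₀ = (c₀ : EReal) :=
    exists_real (by rw [hgw₀]; exact hx₀) (hgbot w₀)
  -- minimize over the compact sublevel set
  obtain ⟨z, hzS, hzmin⟩ := lsc_exists_min hglsc (hlevelcompact c₀)
    ⟨w₀, hw₀W, le_of_eq hc₀⟩
  have hzglobal : ∀ x, g z ≤ g x := by
    intro x
    obtain ⟨w, hwW, v, hvV, hwv⟩ := hdecomp x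
    have hgx : g x = g w := by rw [← hwv]; exact hVinv v hvV w
    rw [hgx]
    by_cases hcase : g w ≤ (c₀ : EReal)
    · exact hzmin w ⟨hwW, hcase⟩
    · exact le_trans (le_trans hzS.2 (le_of_not_ge hcase)) (le_refl _)
  have hinf : (⨅ y : Fin n → ℝ, g y) = g z :=
    le_antisymm (iInf_le _ z) (le_iInf hzglobal)
  obtain ⟨mR, hmR⟩ : ∃ mR : ℝ, g z = (mR : EReal) := by
    refine exists_real ?_ (hgbot z)
    intro h
    have h2 := hzS.2
    rw [h] at h2
    exact absurd (top_le_iff.mp h2) (EReal.coe_ne_top c₀)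
  -- the compact convex set K
  set K : Set (Fin n → ℝ) := {w : Fin n → ℝ | w ∈ W ∧ g w ≤ (mR : EReal)} with hK
  have hKne : K.Nonempty := ⟨z, hzS.1, le_of_eq hmR⟩
  have hKconv : Convex ℝ K := by
    have h1 : K = (W : Set (Fin n → ℝ)) ∩ ⋂ i, {x : Fin n → ℝ | f i x ≤ (mR : EReal)} := by
      ext x
      simp only [hK, mem_setOf_eq, mem_inter_iff, mem_iInter, SetLike.mem_coe]
      constructor
      · rintro ⟨h1, h2⟩
        exact ⟨h1, fun i => le_trans (hfg i x) h2⟩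
      · rintro ⟨h1, h2⟩
        exact ⟨h1, iSup_le h2⟩
    rw [h1]
    exact W.convex.inter (convex_iInter fun i => convex_sublevel (hconv i) mR)
  have hKcomp : IsCompact K := hlevelcompact mR
  refine ⟨K, V, hKne, hKconv, hKcomp, ?_⟩
  ext x
  simp only [mem_setOf_eq]
  constructor
  · intro hx
    obtain ⟨w, hwW, v, hvV, hwv⟩ := hdecomp x
    have hgx : g x = g w := by rw [← hwv]; exact hVinv v hvV w
    have hwK : w ∈ K := by
      refine ⟨hwW, ?_⟩
      rw [← hgx, hx, hinf, hmR]
    rw [Set.mem_add]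
    exact ⟨w, hwK, v, hvV, hwv⟩
  · intro hx
    rw [Set.mem_add] at hx
    obtain ⟨w, hwK, v, hvV, hwv⟩ := hx
    have hgx : g x = g w := by rw [← hwv]; exact hVinv v hvV w
    rw [hgx, hinf, hmR]
    refine le_antisymm hwK.2 ?_
    have := hzglobal w
    rw [hmR] at this
    exact this
end
end
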